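/- For all integers n ≥ 3, \sum_{l=0}^{n} \binom{n}{l} B_l HB_{n-l}^{(ν,k-1)}(x) = (n+1) HB_n^{(ν,k)}(x) − n(x + 1/2) HB_{n-1}^{(ν,k)}(x) + n(n-1)(ν + 1/12) HB_{n-2}^{(ν,k)}(x) + \sum_{l=0}^{n-3} \binom{n}{l} B_{n-l} HB_l^{(ν,k)}(x), where B_l are the ordinary Bernoulli numbers (with B_1 = -1/2). -/

import Mathlib

open PowerSeries Finset

/-- The power series e^{-t}. -/
noncomputable def expNeg : PowerSeries ℝ := rescale (-1) (PowerSeries.exp ℝ)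

/-- Li_k(1-e^{-t})/(1-e^{-t}) = ∑_{m≥0} (1-e^{-t})^m/(m+1)^k as a formal power series. -/
noncomputable def pbGF (k : ℤ) : PowerSeries ℝ :=
  PowerSeries.mk fun n => ∑ m ∈ Finset.range (n + 1),
    (1 / ((m : ℝ) + 1) ^ k) * PowerSeries.coeff n ((1 - expNeg) ^ m)

/-- The power series e^{-ν t²/2}. -/
noncomputable def hermGF (ν : ℝ) : PowerSeries ℝ :=
  PowerSeries.mk fun n =>
    if Even n then (-ν / 2) ^ (n / 2) / (Nat.factorial (n / 2)) else 0

/-- Hermite and poly-Bernoulli mixed-type polynomials. -/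
noncomputable def HB (ν : ℝ) (k : ℤ) (n : ℕ) (x : ℝ) : ℝ :=
  (Nat.factorial n) *
    PowerSeries.coeff n (hermGF ν * pbGF k * rescale x (PowerSeries.exp ℝ))

/-- Poly-Bernoulli polynomials. -/
noncomputable def pB (k : ℤ) (n : ℕ) (x : ℝ) : ℝ :=
  (Nat.factorial n) * PowerSeries.coeff n (pbGF k * rescale x (PowerSeries.exp ℝ))

/-- Hermite polynomials of order ν. -/
noncomputable def Herm (ν : ℝ) (n : ℕ) (x : ℝ) : ℝ :=
  (Nat.factorial n) * PowerSeries.coeff n (hermGF ν * rescale x (PowerSeries.exp ℝ))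

/-- Stirling numbers of the second kind. -/
def S2 : ℕ → ℕ → ℕ
  | 0, 0 => 1
  | 0, _ + 1 => 0
  | _ + 1, 0 => 0
  | n + 1, m + 1 => (m + 1) * S2 n (m + 1) + S2 n m

/-! ### Auxiliary lemmas -/

lemma coeff_expNeg (n : ℕ) : coeff n expNeg = (-1)^n / n.factorial := by
  simp [expNeg, coeff_rescale, coeff_exp, div_eq_mul_inv]

lemma exp_mul_expNeg : PowerSeries.exp ℝ * expNeg = 1 := exp_mul_exp_neg_eq_one

lemma deriv_expNeg : d⁄dX ℝ expNeg = -expNeg := by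
  ext n
  rw [coeff_derivative]
  simp only [map_neg, coeff_expNeg, pow_succ, Nat.factorial_succ]
  push_cast
  have : (n.factorial : ℝ) ≠ 0 := by positivity
  field_simp

lemma constCoeff_z : constantCoeff (1 - expNeg) = 0 := by
  have := coeff_expNeg 0
  simp only [coeff_zero_eq_constantCoeff] at this
  simp [this]

lemma coeff_z_pow_zero {n m : ℕ} (h : n < m) : coeff n ((1 - expNeg)^m) = 0 := by
  have : (X : PowerSeries ℝ)^m ∣ (1 - expNeg)^m :=
    pow_dvd_pow_of_dvd (X_dvd_iff.mpr constCoeff_z) m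
  exact (X_pow_dvd_iff.mp this) n h

lemma deriv_z : d⁄dX ℝ (1 - expNeg) = expNeg := by
  rw [map_sub, deriv_expNeg]; simp

lemma exp_sub_one_mul_expNeg : (PowerSeries.exp ℝ - 1) * expNeg = 1 - expNeg := by
  rw [sub_mul, exp_mul_expNeg, one_mul]

noncomputable def PS (k : ℤ) (N : ℕ) : PowerSeries ℝ :=
  ∑ m ∈ Finset.range N, (1 / ((m : ℝ) + 1) ^ k) • (1 - expNeg) ^ m

lemma coeff_pbGF_eq {k : ℤ} {n N : ℕ} (h : n < N) :
    coeff n (pbGF k) = coeff n (PS k N) := by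
  rw [pbGF, coeff_mk, PS, map_sum]
  simp only [coeff_smul, smul_eq_mul]
  apply Finset.sum_subset
  · intro m hm
    simp only [mem_range] at hm ⊢; omega
  · intro m hm hm'
    simp only [mem_range, not_lt] at hm'
    rw [coeff_z_pow_zero (by omega), mul_zero]

lemma exp_sub_one_mul_deriv_z_pow (m : ℕ) :
    (PowerSeries.exp ℝ - 1) * d⁄dX ℝ ((1 - expNeg)^m) = (m : PowerSeries ℝ) * (1 - expNeg)^m := by
  rw [Derivation.leibniz_pow, deriv_z]
  rcases m with _ | m
  · simp
  · have h1 : ((1 : PowerSeries ℝ) - expNeg) ^ (m + 1 - 1) = (1 - expNeg) ^ m := by norm_num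
    rw [h1]
    simp only [nsmul_eq_mul, smul_eq_mul]
    push_cast
    linear_combination ((m : PowerSeries ℝ) + 1) * (1 - expNeg)^m * exp_sub_one_mul_expNeg

lemma PS_step (k : ℤ) (N : ℕ) :
    PS k N + (PowerSeries.exp ℝ - 1) * d⁄dX ℝ (PS k N) = PS (k-1) N := by
  unfold PS
  rw [map_sum, Finset.mul_sum, ← Finset.sum_add_distrib]
  apply Finset.sum_congr rfl
  intro m _
  rw [Derivation.map_smul, mul_smul_comm, exp_sub_one_mul_deriv_z_pow, ← smul_add]
  have h2 : (1 - expNeg)^m + (m : PowerSeries ℝ) * (1 - expNeg)^m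
      = (((m:ℝ) + 1)) • (1 - expNeg)^m := by
    have h3 := Nat.cast_smul_eq_nsmul ℝ (m+1) ((1 - expNeg)^m)
    rw [nsmul_eq_mul] at h3
    push_cast at h3 ⊢
    rw [h3]; ring
  rw [h2, smul_smul]
  congr 1
  have hm : ((m:ℝ)+1) ≠ 0 := by positivity
  rw [zpow_sub_one₀ hm]
  field_simp

lemma coeff_mul_congr {f g A : PowerSeries ℝ} {n : ℕ} (h : ∀ j ≤ n, coeff j f = coeff j g) :
    coeff n (A * f) = coeff n (A * g) := by
  rw [coeff_mul, coeff_mul]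
  apply Finset.sum_congr rfl
  intro p hp
  rw [Finset.HasAntidiagonal.mem_antidiagonal] at hp
  rw [h p.2 (by omega)]

lemma pbGF_step (k : ℤ) :
    pbGF (k - 1) = pbGF k + (PowerSeries.exp ℝ - 1) * d⁄dX ℝ (pbGF k) := by
  ext n
  rw [coeff_pbGF_eq (show n < n+2 by omega), ← PS_step k (n+2), map_add, map_add,
    coeff_pbGF_eq (show n < n+2 by omega)]
  congr 1
  apply coeff_mul_congr
  intro j hj
  rw [coeff_derivative, coeff_derivative, coeff_pbGF_eq (show j + 1 < n+2 by omega)]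

lemma deriv_hermGF (ν : ℝ) : d⁄dX ℝ (hermGF ν) = C (-ν) * (X * hermGF ν) := by
  ext n
  rw [coeff_derivative, coeff_C_mul]
  rcases n with _ | n
  · simp [coeff_zero_X_mul, hermGF, coeff_mk]
  · rw [coeff_succ_X_mul]
    simp only [hermGF, coeff_mk]
    rcases Nat.even_or_odd n with ⟨r, hr⟩ | ⟨r, hr⟩
    · subst hr
      have h1 : Even (r + r + 1 + 1) := ⟨r + 1, by ring⟩
      have h2 : Even (r + r) := ⟨r, rfl⟩
      rw [if_pos h1, if_pos h2]
      have e1 : (r + r + 1 + 1) / 2 = r + 1 := by omega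
      have e2 : (r + r) / 2 = r := by omega
      rw [e1, e2, pow_succ, Nat.factorial_succ]
      have h : (r.factorial : ℝ) ≠ 0 := by positivity
      push_cast
      field_simp
      ring
    · subst hr
      have h1 : ¬ Even (2 * r + 1 + 1 + 1) := by
        rw [Nat.even_add_one]; push_neg; exact ⟨r + 1, by ring⟩
      have h2 : ¬ Even (2 * r + 1) := by
        rw [Nat.even_add_one]; push_neg; exact ⟨r, by ring⟩
      rw [if_neg h1, if_neg h2, zero_mul, mul_zero]

lemma deriv_rescale_exp (x : ℝ) :
    d⁄dX ℝ (rescale x (PowerSeries.exp ℝ)) = C x * rescale x (PowerSeries.exp ℝ) := by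
  ext n
  rw [coeff_derivative, coeff_C_mul, coeff_rescale, coeff_rescale, coeff_exp, coeff_exp]
  have h : (n.factorial : ℝ) ≠ 0 := by positivity
  simp only [map_div₀, map_one, map_natCast, Nat.factorial_succ]
  push_cast
  field_simp
  ring

lemma master (ν x : ℝ) (k : ℤ) :
    bernoulliPowerSeries ℝ * (hermGF ν * pbGF (k-1) * rescale x (PowerSeries.exp ℝ)) =
      bernoulliPowerSeries ℝ * (hermGF ν * pbGF k * rescale x (PowerSeries.exp ℝ)) +
      X * (d⁄dX ℝ (hermGF ν * pbGF k * rescale x (PowerSeries.exp ℝ))) +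
      C ν * (X^2 * (hermGF ν * pbGF k * rescale x (PowerSeries.exp ℝ))) -
      C x * (X * (hermGF ν * pbGF k * rescale x (PowerSeries.exp ℝ))) := by
  have hd : d⁄dX ℝ (hermGF ν * pbGF k * rescale x (PowerSeries.exp ℝ)) =
      C (-ν) * (X * hermGF ν) * (pbGF k * rescale x (PowerSeries.exp ℝ)) +
      hermGF ν * d⁄dX ℝ (pbGF k) * rescale x (PowerSeries.exp ℝ) +
      hermGF ν * pbGF k * (C x * rescale x (PowerSeries.exp ℝ)) := by
    rw [Derivation.leibniz, Derivation.leibniz, deriv_hermGF, deriv_rescale_exp]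
    simp only [smul_eq_mul]
    ring
  rw [pbGF_step k, hd]
  have hb := bernoulliPowerSeries_mul_exp_sub_one ℝ
  simp only [map_neg]
  linear_combination (hermGF ν * d⁄dX ℝ (pbGF k) * rescale x (PowerSeries.exp ℝ)) * hb

lemma coeff_bern (n : ℕ) :
    coeff n (bernoulliPowerSeries ℝ) = (bernoulli n : ℝ) / n.factorial := by
  rw [bernoulliPowerSeries, coeff_mk, eq_ratCast]
  push_cast
  ring

lemma fact_mul_coeff_bern_mul (G : PowerSeries ℝ) (n : ℕ) :
    (n.factorial : ℝ) * coeff n (bernoulliPowerSeries ℝ * G) =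
      ∑ i ∈ Finset.range (n+1),
        (n.choose i : ℝ) * (bernoulli i : ℝ) * ((n-i).factorial * coeff (n-i) G) := by
  rw [coeff_mul, Finset.Nat.sum_antidiagonal_eq_sum_range_succ_mk, Finset.mul_sum]
  apply Finset.sum_congr rfl
  intro i hi
  rw [Finset.mem_range] at hi
  rw [coeff_bern]
  have key : (n.choose i : ℝ) * i.factorial * (n-i).factorial = n.factorial := by
    exact_mod_cast congrArg (Nat.cast : ℕ → ℝ)
      (Nat.choose_mul_factorial_mul_factorial (by omega : i ≤ n))
  have hi' : (i.factorial : ℝ) ≠ 0 := by positivity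
  field_simp
  linear_combination (-1 : ℝ) * (bernoulli i : ℝ) * coeff (n-i) G * key

lemma HB_eq (ν : ℝ) (k : ℤ) (j : ℕ) (x : ℝ) :
    (j.factorial : ℝ) * PowerSeries.coeff j
      (hermGF ν * pbGF k * rescale x (PowerSeries.exp ℝ)) = HB ν k j x := rfl

theorem HB_bernoulli_identity (ν : ℝ) (hν : ν ≠ 0) (k : ℤ) (n : ℕ) (hn : 3 ≤ n) (x : ℝ) :
    ∑ l ∈ Finset.range (n + 1), (n.choose l : ℝ) * (bernoulli l : ℝ) * HB ν (k - 1) (n - l) x =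
      ((n : ℝ) + 1) * HB ν k n x - (n : ℝ) * (x + 1 / 2) * HB ν k (n - 1) x +
        (n : ℝ) * ((n : ℝ) - 1) * (ν + 1 / 12) * HB ν k (n - 2) x +
        ∑ l ∈ Finset.range (n - 2), (n.choose l : ℝ) * (bernoulli (n - l) : ℝ) * HB ν k l x := by
  obtain ⟨m, rfl⟩ : ∃ m, n = m + 3 := ⟨n - 3, by omega⟩
  -- Step A: the LHS equals (m+3)! * coeff (B * G')
  have hA : ∑ l ∈ Finset.range (m + 3 + 1),
        ((m+3).choose l : ℝ) * (bernoulli l : ℝ) * HB ν (k - 1) (m + 3 - l) x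
      = ((m+3).factorial : ℝ) * coeff (m+3)
          (bernoulliPowerSeries ℝ *
            (hermGF ν * pbGF (k-1) * rescale x (PowerSeries.exp ℝ))) := by
    rw [fact_mul_coeff_bern_mul]
    apply Finset.sum_congr rfl
    intro i _
    simp only [HB]
  -- Step B: coefficient of the master identity
  have hM := congrArg (fun f => ((m+3).factorial : ℝ) * coeff (m+3) f) (master ν x k)
  simp only [map_add, map_sub, coeff_C_mul] at hM
  rw [hA, hM]
  -- Step C: compute the three correction terms
  have hXd : coeff (m+3) (X * d⁄dX ℝ (hermGF ν * pbGF k * rescale x (PowerSeries.exp ℝ)))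
      = coeff (m+3) (hermGF ν * pbGF k * rescale x (PowerSeries.exp ℝ)) * ((m:ℝ)+3) := by
    have : (m+3) = (m+2) + 1 := rfl
    rw [this, coeff_succ_X_mul, coeff_derivative]
    push_cast
    ring
  have hX2 : coeff (m+3) (X^2 * (hermGF ν * pbGF k * rescale x (PowerSeries.exp ℝ)))
      = coeff (m+1) (hermGF ν * pbGF k * rescale x (PowerSeries.exp ℝ)) := by
    have : (m+3) = (m+1) + 2 := rfl
    rw [this, coeff_X_pow_mul]
  have hX1 : coeff (m+3) (X * (hermGF ν * pbGF k * rescale x (PowerSeries.exp ℝ)))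
      = coeff (m+2) (hermGF ν * pbGF k * rescale x (PowerSeries.exp ℝ)) := by
    have : (m+3) = (m+2) + 1 := rfl
    rw [this, coeff_succ_X_mul]
  rw [hXd, hX2, hX1]
  -- Step D: the bernoulli-times-G sum, reflected and with top three terms peeled
  have hsum : ((m+3).factorial : ℝ) * coeff (m+3)
        (bernoulliPowerSeries ℝ * (hermGF ν * pbGF k * rescale x (PowerSeries.exp ℝ)))
      = (∑ l ∈ Finset.range (m + 1),
          ((m+3).choose l : ℝ) * (bernoulli (m + 3 - l) : ℝ) * HB ν k l x)
        + ((m:ℝ)+3) * ((m:ℝ)+2) / 12 * HB ν k (m+1) x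
        - ((m:ℝ)+3) / 2 * HB ν k (m+2) x
        + HB ν k (m+3) x := by
    rw [fact_mul_coeff_bern_mul]
    simp only [HB_eq]
    have hrefl := Finset.sum_range_reflect
      (fun i => ((m+3).choose i : ℝ) * (bernoulli i : ℝ) * HB ν k (m + 3 - i) x) (m + 4)
    rw [show m + 3 + 1 = m + 4 from rfl, ← hrefl]
    have hstep : ∀ j ∈ Finset.range (m + 4),
        ((m+3).choose (m + 4 - 1 - j) : ℝ) * (bernoulli (m + 4 - 1 - j) : ℝ) *
          HB ν k (m + 3 - (m + 4 - 1 - j)) x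
        = ((m+3).choose j : ℝ) * (bernoulli (m + 3 - j) : ℝ) * HB ν k j x := by
      intro j hj
      rw [Finset.mem_range] at hj
      have e1 : m + 4 - 1 - j = m + 3 - j := by omega
      have e2 : m + 3 - (m + 3 - j) = j := by omega
      have e3 : (m+3).choose (m + 3 - j) = (m+3).choose j := Nat.choose_symm (by omega)
      rw [e1, e2, e3]
    rw [Finset.sum_congr rfl hstep]
    rw [show m + 4 = (m + 3) + 1 from rfl, Finset.sum_range_succ,
      show m + 3 = (m + 2) + 1 from rfl, Finset.sum_range_succ,
      show m + 2 = (m + 1) + 1 from rfl, Finset.sum_range_succ]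
    have b0 : (bernoulli (m + 3 - (m+3)) : ℝ) = 1 := by
      norm_num [bernoulli_zero]
    have b1 : (bernoulli (m + 3 - (m+2)) : ℝ) = -1/2 := by
      have : m + 3 - (m+2) = 1 := by omega
      rw [this, bernoulli_one]; norm_num
    have b2 : (bernoulli (m + 3 - (m+1)) : ℝ) = 1/6 := by
      have : m + 3 - (m+1) = 2 := by omega
      rw [this, bernoulli_eq_bernoulli'_of_ne_one (by norm_num), bernoulli'_two]; norm_num
    have c0 : ((m+3).choose (m+3) : ℝ) = 1 := by simp
    have c1 : ((m+3).choose (m+2) : ℝ) = (m:ℝ) + 3 := by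
      have : (m+3).choose (m+2) = (m+3).choose 1 := by
        have h := Nat.choose_symm (show 1 ≤ m + 3 by omega)
        simpa using h
      rw [this, Nat.choose_one_right]; push_cast; ring
    have c2 : ((m+3).choose (m+1) : ℝ) = ((m:ℝ)+3) * ((m:ℝ)+2) / 2 := by
      have : (m+3).choose (m+1) = (m+3).choose 2 := by
        have h := Nat.choose_symm (show 2 ≤ m + 3 by omega)
        simpa using h
      rw [this, Nat.cast_choose_two]; push_cast; ring
    rw [b0, b1, b2, c0, c1, c2]
    push_cast
    ring
  -- Step E: final real arithmetic
  have f3 : ((m+3).factorial : ℝ) = ((m:ℝ)+3) * (((m+2).factorial : ℝ)) := by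
    rw [show m + 3 = (m+2)+1 from rfl, Nat.factorial_succ]; push_cast; ring
  have f2 : ((m+2).factorial : ℝ) = ((m:ℝ)+2) * (((m+1).factorial : ℝ)) := by
    rw [show m + 2 = (m+1)+1 from rfl, Nat.factorial_succ]; push_cast; ring
  rw [mul_sub, mul_add, mul_add, hsum]
  simp only [HB, show m + 3 - 1 = m + 2 from rfl, show m + 3 - 2 = m + 1 from rfl]
  push_cast [f3, f2]
  ring
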